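/- Every matrix ρ in the kernel of the Lindblad generator ℒ (i.e., every stationary state of the evolution) has ρ(1,1) = 0, ρ(0,1) = ρ(1,0) = ρ(1,2) = ρ(2,1) = 0; that is, the stationary states are exactly the matrices supported on the span of |1⟩ and |3⟩. -/

import Mathlib

open Matrix

noncomputable def E1 : Matrix (Fin 3) (Fin 3) ℂ := Matrix.single 0 1 1
noncomputable def E2 : Matrix (Fin 3) (Fin 3) ℂ := Matrix.single 2 1 1

/-- The Lindblad generator of laser cooling. -/
noncomputable def lind (γ₁ γ₂ : ℝ) (ρ : Matrix (Fin 3) (Fin 3) ℂ) :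
    Matrix (Fin 3) (Fin 3) ℂ :=
  (γ₁ : ℂ) • (E1 * ρ * E1ᴴ - (1/2 : ℂ) • (E1ᴴ * E1 * ρ + ρ * (E1ᴴ * E1)))
    + (γ₂ : ℂ) • (E2 * ρ * E2ᴴ - (1/2 : ℂ) • (E2ᴴ * E2 * ρ + ρ * (E2ᴴ * E2)))

theorem stmt14 (γ₁ γ₂ : ℝ) (h₁ : 0 < γ₁) (h₂ : 0 < γ₂) (ρ : Matrix (Fin 3) (Fin 3) ℂ) :
    lind γ₁ γ₂ ρ = 0 ↔
      ρ 1 1 = 0 ∧ ρ 0 1 = 0 ∧ ρ 1 0 = 0 ∧ ρ 1 2 = 0 ∧ ρ 2 1 = 0 := by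
  have hgs : (γ₁ : ℂ) + γ₂ ≠ 0 := by exact_mod_cast (by positivity : (0:ℝ) < γ₁ + γ₂).ne'
  constructor
  · intro h
    have e11 := congrFun (congrFun h 1) 1
    have e01 := congrFun (congrFun h 0) 1
    have e10 := congrFun (congrFun h 1) 0
    have e12 := congrFun (congrFun h 1) 2
    have e21 := congrFun (congrFun h 2) 1
    simp only [lind, E1, E2, Matrix.add_apply, Matrix.smul_apply, Matrix.sub_apply,
      Matrix.mul_apply, Matrix.zero_apply, Fin.sum_univ_three, Matrix.conjTranspose_apply,
      Matrix.single, Matrix.of_apply, Fin.isValue, star_zero, star_one, smul_eq_mul,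
      mul_zero, zero_mul, mul_one, one_mul, add_zero, zero_add,
      show ((0:Fin 3) = 2) = False from by simp [Fin.ext_iff],
      show ((2:Fin 3) = 0) = False from by simp [Fin.ext_iff],
      show ((1:Fin 3) = 2) = False from by simp [Fin.ext_iff],
      show ((2:Fin 3) = 1) = False from by simp [Fin.ext_iff],
      show ((0:Fin 3) = 1) = False from by simp [Fin.ext_iff],
      show ((1:Fin 3) = 0) = False from by simp [Fin.ext_iff],
      if_true, if_false, false_and, and_false, true_and, and_true, and_self,
      eq_self_iff_true] at e11 e01 e10 e12 e21
    have h11 : ρ 1 1 = 0 := by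
      have : ((γ₁:ℂ) + γ₂) * ρ 1 1 = 0 := by linear_combination -e11
      exact (mul_eq_zero.mp this).resolve_left hgs
    refine ⟨h11, ?_, ?_, ?_, ?_⟩
    · have : ((γ₁:ℂ) + γ₂) * ρ 0 1 = 0 := by linear_combination -2 * e01
      exact (mul_eq_zero.mp this).resolve_left hgs
    · have : ((γ₁:ℂ) + γ₂) * ρ 1 0 = 0 := by linear_combination -2 * e10
      exact (mul_eq_zero.mp this).resolve_left hgs
    · have : ((γ₁:ℂ) + γ₂) * ρ 1 2 = 0 := by linear_combination -2 * e12
      exact (mul_eq_zero.mp this).resolve_left hgs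
    · have : ((γ₁:ℂ) + γ₂) * ρ 2 1 = 0 := by linear_combination -2 * e21
      exact (mul_eq_zero.mp this).resolve_left hgs
  · rintro ⟨h1, h2, h3, h4, h5⟩
    ext i j
    fin_cases i <;> fin_cases j <;>
      simp [lind, E1, E2, Matrix.mul_apply, Fin.sum_univ_three,
        Matrix.single, h1, h2, h3, h4, h5]
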